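/- Let 𝔍 be a W-graph ideal with respect to J and q_{y,w} the polynomials from the unique basis (c_w) with b_w = c_w + q Σ_{y<w} q_{y,w} c_y. Suppose w < sw ∈ 𝔍 and y < sw. If y = w then q_{y,sw} = 1; otherwise: (i) q_{y,sw} = q·q_{y,w} if s is an ascent of y; (ii) q_{y,sw} = −q⁻¹(q_{y,w} − μ_{y,w}) + q_{sy,w} + Σ_x μ_{y,x} q_{x,w} if s is a strong descent of y; (iii) q_{y,sw} = −q⁻¹(q_{y,w} − μ_{y,w}) + Σ_x μ_{y,x} q_{x,w} if s is a weak descent of y; where q_{y,w} and μ_{y,w} are taken as 0 if y is not < w, and the sums extend over x ∈ 𝔍 with y < x < w and s not a descent of x. -/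

import Mathlib

open LaurentPolynomial Polynomial

noncomputable section

namespace WGI

/-- The ring `A = ℤ[q,q⁻¹]` of Laurent polynomials. -/
abbrev A : Type := LaurentPolynomial ℤ

/-- The indeterminate `q`. -/
def Q : A := LaurentPolynomial.T 1

/-- The element `q⁻¹`. -/
def Qi : A := LaurentPolynomial.T (-1)

variable {B W : Type} [Group W] {M : CoxeterMatrix B} (cs : CoxeterSystem M W)

/-- One step of the relation generating the Bruhat order: `w = tu` for a reflection `t`
(or `t = 1`) and `l(u) ≤ l(w)`. -/
def BStep (u w : W) : Prop :=
  cs.length u ≤ cs.length w ∧ ∃ t : W, (cs.IsReflection t ∨ t = 1) ∧ w = t * u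

/-- The Bruhat order on `W`: the transitive (and reflexive) closure of `BStep`. -/
def BrLe (u w : W) : Prop := Relation.ReflTransGen (BStep cs) u w

/-- Strict Bruhat order. -/
def BrLt (u w : W) : Prop := BrLe cs u w ∧ u ≠ w

/-- The left weak order: `u ≤_L w` iff `l(wu⁻¹) = l(w) - l(u)`, i.e. `u` is a suffix of `w`. -/
def WkLe (u w : W) : Prop := cs.length (w * u⁻¹) + cs.length u = cs.length w

/-- Strict left weak order. -/
def WkLt (u w : W) : Prop := WkLe cs u w ∧ u ≠ w

/-- An ideal of `(W, ≤_L)`: a subset closed under taking suffixes. -/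
def IsIdealWk (I : Set W) : Prop := ∀ u w : W, WkLe cs u w → w ∈ I → u ∈ I

/-- The set `D_J` of minimal left coset representatives of `W_J`. -/
def DD (J : Set B) : Set W := { w | ∀ j ∈ J, cs.length w < cs.length (w * cs.simple j) }

/-- Strong ascent: `sw > w` and `sw ∈ I`. -/
def SA (I : Set W) (s : B) (w : W) : Prop :=
  cs.length w < cs.length (cs.simple s * w) ∧ cs.simple s * w ∈ I

/-- Strong descent: `sw < w`. -/
def SD (s : B) (w : W) : Prop := cs.length (cs.simple s * w) < cs.length w

/-- Weak ascent: `sw > w` and `sw ∈ D_J \ I`. -/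
def WA (I : Set W) (J : Set B) (s : B) (w : W) : Prop :=
  cs.length w < cs.length (cs.simple s * w) ∧ cs.simple s * w ∈ DD cs J \ I

/-- Weak descent: `sw > w` and `sw ∉ D_J`. -/
def WD (J : Set B) (s : B) (w : W) : Prop :=
  cs.length w < cs.length (cs.simple s * w) ∧ cs.simple s * w ∉ DD cs J

/-- Descents: strong or weak. -/
def Desc (J : Set B) (s : B) (w : W) : Prop := SD cs s w ∨ WD cs J s w

/-- Ascents: strong or weak. -/
def Asc (I : Set W) (J : Set B) (s : B) (w : W) : Prop := SA cs I s w ∨ WA cs I J s w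

/-- The data making the ideal `I` (of the left weak order, contained in `D_J`) a
`W`-graph ideal with respect to `J`: an `H(W)`-module (a module together with operators
`T s` satisfying the quadratic and braid relations of the Hecke algebra) which is free
over `A` with basis indexed by `I`, on which the generators act by the four-case formula
of Definition 5.2, together with a compatible semilinear bar involution fixing `b₁`. -/
structure WGModule (I : Set W) (J : Set B) where
  V : Type
  [acg : AddCommGroup V]
  [mod : Module A V]
  ideal : IsIdealWk cs I
  subset : I ⊆ DD cs J
  one_mem : (1 : W) ∈ I
  bas : Module.Basis I A V
  T : B → V →ₗ[A] V
  quad : ∀ s : B, (T s) ∘ₗ (T s) = LinearMap.id + (Q - Qi) • T s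
  braid : ∀ s t : B,
    ((CoxeterSystem.alternatingWord s t (M s t)).map fun i => (T i : Module.End A V)).prod =
    ((CoxeterSystem.alternatingWord t s (M s t)).map fun i => (T i : Module.End A V)).prod
  /-- the polynomials `r^s_{y,w}` (divided by `q`, as elements of `ℤ[q]` with zero constant
  term they are recorded in `qℤ[q]` via `r_const`); `r s w y` is `r^s_{y,w}`. -/
  r : B → I → (I →₀ Polynomial ℤ)
  r_const : ∀ (s : B) (w y : I), ((r s w) y).coeff 0 = 0
  r_supp : ∀ (s : B) (w y : I), (r s w) y ≠ 0 → BrLt cs (y : W) (cs.simple s * (w : W))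
  act_SA : ∀ (s : B) (w : I) (h : SA cs I s (w : W)),
    T s (bas w) = bas ⟨cs.simple s * (w : W), h.2⟩
  act_SD : ∀ (s : B) (w : I), SD cs s (w : W) → ∀ h' : cs.simple s * (w : W) ∈ I,
    T s (bas w) = bas ⟨cs.simple s * (w : W), h'⟩ + (Q - Qi) • bas w
  act_WD : ∀ (s : B) (w : I), WD cs J s (w : W) → T s (bas w) = -Qi • bas w
  act_WA : ∀ (s : B) (w : I), WA cs I J s (w : W) →
    T s (bas w) = Q • bas w - (r s w).sum fun y p => (Polynomial.toLaurent p) • bas y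
  bar : V → V
  bar_add : ∀ x y : V, bar (x + y) = bar x + bar y
  bar_smul : ∀ (a : A) (x : V), bar (a • x) = (LaurentPolynomial.invert a) • bar x
  bar_one : bar (bas ⟨(1 : W), one_mem⟩) = bas ⟨(1 : W), one_mem⟩
  bar_T : ∀ (s : B) (x : V), bar (T s x) = T s (bar x) - (Q - Qi) • bar x

attribute [instance] WGModule.acg WGModule.mod

/-- `I` is a `W`-graph ideal with respect to `J`. -/
def IsWGraphIdeal (I : Set W) (J : Set B) : Prop := Nonempty (WGModule cs I J)


open scoped Classical

/-! ### Laurent polynomial infrastructure -/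

lemma QQi : Q * Qi = 1 := by
  rw [Q, Qi, ← LaurentPolynomial.T_add]; norm_num [LaurentPolynomial.T_zero]

lemma QiQ : Qi * Q = 1 := by
  rw [Qi, Q, ← LaurentPolynomial.T_add]; norm_num [LaurentPolynomial.T_zero]

lemma invert_Q : LaurentPolynomial.invert Q = Qi := by
  rw [Q, Qi, LaurentPolynomial.invert_T]

lemma invert_Qi : LaurentPolynomial.invert Qi = Q := by
  rw [Q, Qi, LaurentPolynomial.invert_T]; norm_num

lemma invert_intCast (n : ℤ) : LaurentPolynomial.invert ((n : A)) = (n : A) :=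
  map_intCast _ n

lemma T_mul_apply (n m : ℤ) (f : A) : ((LaurentPolynomial.T n * f : A)).coeff m = f.coeff (m - n) := by
  rw [show (LaurentPolynomial.T n : A) = AddMonoidAlgebra.single n (1 : ℤ) from rfl]
  rw [AddMonoidAlgebra.coeff_single_mul_apply, one_mul]
  congr 1
  omega

lemma toL_coeff_nat (p : Polynomial ℤ) (n : ℕ) :
    (Polynomial.toLaurent p).coeff ((n : ℤ)) = p.coeff n := by
  rw [LaurentPolynomial.coeff_toLaurent]
  exact Finsupp.mapDomain_apply (Nat.castEmbedding (R := ℤ)).injective _ n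

lemma toL_coeff_neg (p : Polynomial ℤ) {n : ℤ} (h : n < 0) :
    (Polynomial.toLaurent p).coeff n = 0 := by
  rw [LaurentPolynomial.coeff_toLaurent]
  apply Finsupp.mapDomain_of_notMem_range
  rintro ⟨m, hm⟩
  have : ((m : ℤ)) = n := hm
  omega

/-- membership in `q ℤ[q]` -/
def SPos (f : A) : Prop := ∃ p : Polynomial ℤ, f = Q * Polynomial.toLaurent p

/-- membership in `ℤ[q]` -/
def NN (f : A) : Prop := ∃ p : Polynomial ℤ, f = Polynomial.toLaurent p

lemma spos_zero : SPos 0 := ⟨0, by simp⟩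

lemma spos_add {f g : A} (hf : SPos f) (hg : SPos g) : SPos (f + g) := by
  obtain ⟨p, rfl⟩ := hf; obtain ⟨q, rfl⟩ := hg
  exact ⟨p + q, by rw [map_add, mul_add]⟩

lemma spos_neg {f : A} (hf : SPos f) : SPos (-f) := by
  obtain ⟨p, rfl⟩ := hf
  exact ⟨-p, by rw [map_neg, mul_neg]⟩

lemma spos_sub {f g : A} (hf : SPos f) (hg : SPos g) : SPos (f - g) := by
  rw [sub_eq_add_neg]; exact spos_add hf (spos_neg hg)

lemma spos_sum {α : Type*} {F : Finset α} {f : α → A} (h : ∀ a ∈ F, SPos (f a)) :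
    SPos (∑ a ∈ F, f a) := by
  classical
  induction F using Finset.induction_on with
  | empty => simpa using spos_zero
  | insert a s hne ih =>
    rw [Finset.sum_insert hne]
    exact spos_add (h _ (Finset.mem_insert_self _ _))
      (ih fun a ha => h a (Finset.mem_insert_of_mem ha))

lemma spos_ite {P : Prop} [Decidable P] {f g : A} (hf : SPos f) (hg : SPos g) :
    SPos (if P then f else g) := by
  split <;> assumption

lemma nn_zero : NN 0 := ⟨0, by simp⟩

lemma nn_one : NN 1 := ⟨1, by simp⟩

lemma nn_add {f g : A} (hf : NN f) (hg : NN g) : NN (f + g) := by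
  obtain ⟨p, rfl⟩ := hf; obtain ⟨q, rfl⟩ := hg
  exact ⟨p + q, by rw [map_add]⟩

lemma nn_intCast (n : ℤ) : NN ((n : A)) :=
  ⟨Polynomial.C n, by rw [Polynomial.toLaurent_C, eq_intCast]⟩

lemma nn_ite {P : Prop} [Decidable P] {f g : A} (hf : NN f) (hg : NN g) :
    NN (if P then f else g) := by
  split <;> assumption

lemma nn_toL (p : Polynomial ℤ) : NN (Polynomial.toLaurent p) := ⟨p, rfl⟩

lemma spos_nn {f : A} (hf : SPos f) : NN f := by
  obtain ⟨p, rfl⟩ := hf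
  exact ⟨Polynomial.X * p, by rw [map_mul, Polynomial.toLaurent_X, Q]⟩

lemma spos_mul_nn {f g : A} (hf : SPos f) (hg : NN g) : SPos (f * g) := by
  obtain ⟨p, rfl⟩ := hf; obtain ⟨q, rfl⟩ := hg
  exact ⟨p * q, by rw [map_mul, mul_assoc]⟩

lemma nn_mul_spos {f g : A} (hf : NN f) (hg : SPos g) : SPos (f * g) := by
  rw [mul_comm]; exact spos_mul_nn hg hf

lemma spos_QL (p : Polynomial ℤ) : SPos (Q * Polynomial.toLaurent p) := ⟨p, rfl⟩

lemma spos_Q : SPos Q := ⟨1, by simp⟩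

lemma spos_of_coeff_zero {p : Polynomial ℤ} (h : p.coeff 0 = 0) :
    SPos (Polynomial.toLaurent p) := by
  refine ⟨p.divX, ?_⟩
  conv_lhs => rw [← Polynomial.X_mul_divX_add p, h]
  rw [map_zero, add_zero, map_mul, Polynomial.toLaurent_X, Q]

lemma spos_sub_coeff_zero (p : Polynomial ℤ) :
    SPos (Polynomial.toLaurent p - ((p.coeff 0 : ℤ) : A)) := by
  refine ⟨p.divX, ?_⟩
  conv_lhs => rw [← Polynomial.X_mul_divX_add p]
  rw [map_add, map_mul, Polynomial.toLaurent_X, ← Q, Polynomial.toLaurent_C, eq_intCast]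
  simp

lemma spos_eq_zero_of_invert {f : A} (hf : SPos f) (h : LaurentPolynomial.invert f = f) :
    f = 0 := by
  obtain ⟨p, rfl⟩ := hf
  have hco : ∀ m : ℤ, m ≤ 0 → ((Q * Polynomial.toLaurent p : A)).coeff m = 0 := by
    intro m hm
    rw [Q, T_mul_apply]
    exact toL_coeff_neg p (by omega)
  apply LaurentPolynomial.ext
  intro m
  rcases le_or_gt m 0 with hm | hm
  · rw [hco m hm]; rfl
  · have : ((Q * Polynomial.toLaurent p : A)).coeff m = ((LaurentPolynomial.invert
        (Q * Polynomial.toLaurent p) : A)).coeff m := by rw [h]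
    rw [this, LaurentPolynomial.invert_apply, hco (-m) (by omega)]; rfl

lemma key2 {p : Polynomial ℤ}
    (h : LaurentPolynomial.invert ((1 + Q ^ 2) * Polynomial.toLaurent p)
      = (1 + Q ^ 2) * Polynomial.toLaurent p) : p = 0 := by
  by_contra hp
  have hQ2 : (Q : A) ^ 2 = LaurentPolynomial.T 2 := by
    rw [Q, sq, ← LaurentPolynomial.T_add]; norm_num
  have happ : ∀ m : ℤ, (((1 + Q ^ 2) * Polynomial.toLaurent p : A)).coeff m
      = (Polynomial.toLaurent p).coeff m + (Polynomial.toLaurent p).coeff (m - 2) := by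
    intro m
    rw [add_mul, one_mul, hQ2, AddMonoidAlgebra.coeff_add, Finsupp.add_apply, T_mul_apply]
  set d := p.natDegree with hd
  have h1 : (((1 + Q ^ 2) * Polynomial.toLaurent p : A)).coeff ((d : ℤ) + 2) = p.coeff d := by
    rw [happ, add_sub_cancel_right]
    have : ((d : ℤ) + 2) = ((d + 2 : ℕ) : ℤ) := by push_cast; ring
    rw [this, toL_coeff_nat, toL_coeff_nat,
      Polynomial.coeff_eq_zero_of_natDegree_lt (by omega), zero_add]
  have h2 : (((1 + Q ^ 2) * Polynomial.toLaurent p : A)).coeff ((d : ℤ) + 2) = 0 := by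
    have := congrArg (fun f : A => f.coeff ((d : ℤ) + 2)) h
    simp only [LaurentPolynomial.invert_apply] at this
    rw [← this, happ, toL_coeff_neg p (by omega), toL_coeff_neg p (by omega), add_zero]
  rw [h1] at h2
  exact Polynomial.leadingCoeff_ne_zero.mpr hp h2




/-! ### Bruhat order lemmas -/

variable {cs}

lemma bstep_length {u w : W} (h : BStep cs u w) : u = w ∨ cs.length u < cs.length w := by
  obtain ⟨hl, t, ht | rfl, rfl⟩ := h
  · right
    refine lt_of_le_of_ne hl ?_
    intro hEq
    obtain ⟨k, hk⟩ := ht.odd_length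
    have hmod := cs.length_mul_mod_two t u
    omega
  · left; rw [one_mul]

lemma brle_length {u w : W} (h : BrLe cs u w) : u = w ∨ cs.length u < cs.length w := by
  induction h with
  | refl => left; rfl
  | tail _ hstep ih =>
    rcases ih with rfl | hlt
    · exact bstep_length hstep
    · rcases bstep_length hstep with rfl | hlt2
      · right; exact hlt
      · right; omega

lemma brle_len_le {u w : W} (h : BrLe cs u w) : cs.length u ≤ cs.length w := by
  rcases brle_length h with rfl | h <;> omega

lemma brlt_length {u w : W} (h : BrLt cs u w) : cs.length u < cs.length w :=
  (brle_length h.1).resolve_left h.2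

lemma brlt_trans_le {x y z : W} (h1 : BrLt cs x y) (h2 : BrLe cs y z) : BrLt cs x z := by
  refine ⟨h1.1.trans h2, fun hEq => ?_⟩
  have := brlt_length h1
  have := brle_len_le h2
  subst hEq
  omega

lemma brlt_smul {s : B} {x : W} (h : cs.length x < cs.length (cs.simple s * x)) :
    BrLt cs x (cs.simple s * x) := by
  refine ⟨Relation.ReflTransGen.single ⟨le_of_lt h, cs.simple s,
    Or.inl (cs.isReflection_simple s), rfl⟩, fun hEq => ?_⟩
  rw [← hEq] at h
  omega

lemma smul_cancel {s : B} (x : W) : cs.simple s * (cs.simple s * x) = x :=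
  cs.simple_mul_simple_cancel_left s

lemma length_smul_dichotomy (s : B) (x : W) :
    cs.length (cs.simple s * x) = cs.length x + 1 ∨
    cs.length (cs.simple s * x) + 1 = cs.length x :=
  cs.length_simple_mul x s

lemma mem_of_sd {I : Set W} (hI : IsIdealWk cs I) {s : B} {x : W} (hx : x ∈ I)
    (h : cs.length (cs.simple s * x) < cs.length x) : cs.simple s * x ∈ I := by
  refine hI _ x ?_ hx
  unfold WkLe
  have hx1 : x * (cs.simple s * x)⁻¹ = cs.simple s := by
    rw [mul_inv_rev, cs.inv_simple]
    group
  rw [hx1, cs.length_simple]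
  rcases length_smul_dichotomy (cs := cs) s x with h1 | h1 <;> omega

lemma not_desc_length {J : Set B} {s : B} {x : W} (h : ¬ Desc cs J s x) :
    cs.length x < cs.length (cs.simple s * x) := by
  have h1 : ¬ (cs.length (cs.simple s * x) < cs.length x) := fun hh => h (Or.inl hh)
  have h2 := cs.length_simple_mul_ne x s
  omega

lemma not_desc_dd {J : Set B} {s : B} {x : W} (h : ¬ Desc cs J s x) :
    cs.simple s * x ∈ DD cs J := by
  by_contra hc
  exact h (Or.inr ⟨not_desc_length h, hc⟩)

lemma asc_of_not_desc {I : Set W} {J : Set B} {s : B} {x : W} (hx : x ∈ I)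
    (h : ¬ Desc cs J s x) : Asc cs I J s x := by
  by_cases hm : cs.simple s * x ∈ I
  · exact Or.inl ⟨not_desc_length h, hm⟩
  · exact Or.inr ⟨not_desc_length h, not_desc_dd h, hm⟩

lemma not_desc_of_asc {I : Set W} {J : Set B} (hsub : I ⊆ DD cs J) {s : B} {x : W}
    (h : Asc cs I J s x) : ¬ Desc cs J s x := by
  rintro (hd | hd)
  · have hd' : cs.length (cs.simple s * x) < cs.length x := hd
    rcases h with ⟨hlt, _⟩ | ⟨hlt, _⟩ <;> omega
  · rcases h with ⟨_, hm⟩ | ⟨_, hm, _⟩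
    · exact hd.2 (hsub hm)
    · exact hd.2 hm

lemma sd_mem_not_desc {I : Set W} {J : Set B} (hsub : I ⊆ DD cs J) {s : B} {y : W}
    (hy : y ∈ I) (hsd : SD cs s y) : ¬ Desc cs J s (cs.simple s * y) := by
  apply not_desc_of_asc hsub
  refine Or.inl ⟨?_, ?_⟩ <;> rw [smul_cancel]
  · exact hsd
  · exact hy


/-! ### The `c`-basis and its coordinates -/

section Module

variable {I : Set W} {J : Set B}

/-- Kronecker delta. -/
def ee {I : Set W} (z y : I) : A := if z = y then 1 else 0

/-- Delta for `s·z = y`. -/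
def ep (cs : CoxeterSystem M W) {I : Set W} (s : B) (z y : I) : A :=
  if cs.simple s * (z : W) = (y : W) then 1 else 0

/-- The `μ`-coefficient, cut off by the descent condition. -/
def dm (cs : CoxeterSystem M W) (J : Set B) {I : Set W} (qp : I → I →₀ Polynomial ℤ)
    (s : B) (y z : I) : A :=
  if Desc cs J s (y : W) then (((qp z y).coeff 0 : ℤ) : A) else 0

variable {D : WGModule cs I J}

/-- The term `c_{sw}` (or `0`). -/
def extra (cs : CoxeterSystem M W) {I : Set W} {J : Set B} {D : WGModule cs I J}
    (c : I → D.V) (s : B) (w : I) : D.V :=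
  if h : cs.simple s * (w : W) ∈ I then c ⟨cs.simple s * (w : W), h⟩ else 0

/-- The `μ`-correction term. -/
def mterm (cs : CoxeterSystem M W) (J : Set B) {I : Set W} {D : WGModule cs I J}
    (c : I → D.V) (qp : I → I →₀ Polynomial ℤ) (s : B) (w : I) : D.V :=
  ∑ z ∈ (qp w).support, dm cs J qp s z w • c z

/-- Coordinates of `T_s c_z` in the `c`-basis. -/
def Fc (cs : CoxeterSystem M W) (J : Set B) {I : Set W} (qp : I → I →₀ Polynomial ℤ)
    (s : B) (z y : I) : A :=
  if Desc cs J s (z : W) then -Qi * ee z y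
  else Q * ee z y + ep cs s z y + dm cs J qp s y z

/-- The `W`-graph property at `w`. -/
def WGP (cs : CoxeterSystem M W) (J : Set B) {I : Set W} {D : WGModule cs I J}
    (c : I → D.V) (qp : I → I →₀ Polynomial ℤ) (s : B) (w : I) : Prop :=
  D.T s (c w) = if Desc cs J s (w : W) then (-Qi) • c w
    else Q • c w + extra cs c s w + mterm cs J c qp s w

variable {c : I → D.V} {qp : I → I →₀ Polynomial ℤ}

lemma htrans' (htrans : ∀ w : I,
      D.bas w = c w + (qp w).sum fun y p => (Q * Polynomial.toLaurent p) • c y) (w : I) :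
    D.bas w = c w + ∑ z ∈ (qp w).support, (Q * Polynomial.toLaurent (qp w z)) • c z :=
  htrans w

lemma ctrans (htrans : ∀ w : I,
      D.bas w = c w + (qp w).sum fun y p => (Q * Polynomial.toLaurent p) • c y) (w : I) :
    c w = D.bas w - ∑ z ∈ (qp w).support, (Q * Polynomial.toLaurent (qp w z)) • c z := by
  rw [htrans' htrans w]; abel

lemma crepr (hsupp : ∀ w y : I, qp w y ≠ 0 → BrLt cs (y : W) (w : W))
    (htrans : ∀ w : I,
      D.bas w = c w + (qp w).sum fun y p => (Q * Polynomial.toLaurent p) • c y) :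
    ∀ n : ℕ, ∀ z : I, cs.length (z : W) ≤ n →
      ((D.bas.repr (c z)) z = 1 ∧
        ∀ x : I, x ≠ z → (D.bas.repr (c z)) x ≠ 0 → BrLt cs (x : W) (z : W)) := by
  intro n
  induction n using Nat.strong_induction_on with
  | _ n ih =>
  intro z hz
  have hP : ∀ x : I, x ∈ (qp z).support →
      ((D.bas.repr (c x)) x = 1 ∧
        ∀ x' : I, x' ≠ x → (D.bas.repr (c x)) x' ≠ 0 → BrLt cs (x' : W) (x : W)) := by
    intro x hx
    have hlt : BrLt cs (x : W) (z : W) := hsupp z x (Finsupp.mem_support_iff.mp hx)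
    exact ih (cs.length (x : W)) (lt_of_lt_of_le (brlt_length hlt) hz) x le_rfl
  have hrepr : D.bas.repr (c z) = Finsupp.single z 1 -
      ∑ x ∈ (qp z).support, (Q * Polynomial.toLaurent (qp z x)) • D.bas.repr (c x) := by
    rw [ctrans htrans z, map_sub, map_sum, Module.Basis.repr_self]
    congr 1
    exact Finset.sum_congr rfl fun x _ => (map_smul _ _ _)
  have hxz : ∀ x ∈ (qp z).support, (D.bas.repr (c x)) z = 0 := by
    intro x hx
    by_contra h0
    have hlt : BrLt cs (x : W) (z : W) := hsupp z x (Finsupp.mem_support_iff.mp hx)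
    have hzx : z ≠ x := by
      intro hEq
      rw [hEq] at hlt
      exact hlt.2 rfl
    have := (hP x hx).2 z hzx h0
    have h1 := brlt_length hlt
    have h2 := brlt_length this
    omega
  constructor
  · rw [hrepr, Finsupp.sub_apply, Finsupp.single_eq_same, Finsupp.finset_sum_apply]
    rw [Finset.sum_eq_zero, sub_zero]
    intro x hx
    rw [Finsupp.smul_apply, hxz x hx, smul_zero]
  · intro x hxne h0
    rw [hrepr, Finsupp.sub_apply, Finsupp.finset_sum_apply] at h0
    rw [Finsupp.single_eq_of_ne hxne, zero_sub, neg_ne_zero] at h0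
    obtain ⟨x', hx', hne'⟩ := Finset.exists_ne_zero_of_sum_ne_zero h0
    rw [Finsupp.smul_apply] at hne'
    have hrx : (D.bas.repr (c x')) x ≠ 0 := by
      intro hEq; rw [hEq, smul_zero] at hne'; exact hne' rfl
    have hlt' : BrLt cs (x' : W) (z : W) := hsupp z x' (Finsupp.mem_support_iff.mp hx')
    by_cases hxx : x = x'
    · rw [hxx]; exact hlt'
    · exact brlt_trans_le ((hP x' hx').2 x hxx hrx) hlt'.1

lemma cindep (hsupp : ∀ w y : I, qp w y ≠ 0 → BrLt cs (y : W) (w : W))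
    (htrans : ∀ w : I,
      D.bas w = c w + (qp w).sum fun y p => (Q * Polynomial.toLaurent p) • c y) :
    ∀ (F : Finset I) (g : I → A), ∑ i ∈ F, g i • c i = 0 → ∀ i ∈ F, g i = 0 := by
  intro F
  induction F using Finset.strongInduction with
  | _ F ihF =>
  intro g hg i hi
  obtain ⟨i₀, hi₀, hmax⟩ := F.exists_max_image (fun j => cs.length (j : W)) ⟨i, hi⟩
  have hg0 : g i₀ = 0 := by
    have h1 := congrArg (fun v => (D.bas.repr v) i₀) hg
    simp only [map_sum, map_smul, Finsupp.finset_sum_apply, Finsupp.smul_apply,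
      map_zero, Finsupp.zero_apply] at h1
    rw [Finset.sum_eq_single i₀] at h1
    · rw [(crepr hsupp htrans (cs.length (i₀ : W)) i₀ le_rfl).1, smul_eq_mul,
        mul_one] at h1
      exact h1
    · intro j hj hjne
      have hj0 : (D.bas.repr (c j)) i₀ = 0 := by
        by_contra hc
        have := (crepr hsupp htrans (cs.length (j : W)) j le_rfl).2 i₀ (Ne.symm hjne) hc
        have h2 := brlt_length this
        have h3 := hmax j hj
        omega
      rw [hj0, smul_zero]
    · intro h; exact absurd hi₀ h
  by_cases hii : i = i₀
  · rwa [hii]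
  · refine ihF (F.erase i₀) (Finset.erase_ssubset hi₀) g ?_ i
      (Finset.mem_erase.mpr ⟨hii, hi⟩)
    have h4 : ∑ x ∈ F.erase i₀, g x • c x + g i₀ • c i₀ = ∑ x ∈ F, g x • c x :=
      Finset.sum_erase_add F _ hi₀
    rw [hg0, zero_smul, add_zero] at h4
    rw [h4, hg]

/-- The `c`-basis. -/
def cbas (hsupp : ∀ w y : I, qp w y ≠ 0 → BrLt cs (y : W) (w : W))
    (htrans : ∀ w : I,
      D.bas w = c w + (qp w).sum fun y p => (Q * Polynomial.toLaurent p) • c y) :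
    Module.Basis I A D.V :=
  Module.Basis.mk (v := fun i => c i)
    (linearIndependent_iff'.mpr (cindep hsupp htrans))
    (by
      rw [← D.bas.span_eq]
      refine Submodule.span_le.mpr ?_
      rintro _ ⟨w, rfl⟩
      rw [htrans' htrans w]
      refine Submodule.add_mem _ (Submodule.subset_span ⟨w, rfl⟩) ?_
      exact Submodule.sum_mem _ fun z _ =>
        Submodule.smul_mem _ _ (Submodule.subset_span ⟨z, rfl⟩))

variable (hsupp : ∀ w y : I, qp w y ≠ 0 → BrLt cs (y : W) (w : W))
variable (htrans : ∀ w : I,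
      D.bas w = c w + (qp w).sum fun y p => (Q * Polynomial.toLaurent p) • c y)

lemma cbas_apply (z : I) : (cbas hsupp htrans) z = c z := Module.Basis.mk_apply _ _ z

lemma cb_repr_c (z y : I) : ((cbas hsupp htrans).repr (c z)) y = ee z y := by
  have h1 : c z = (cbas hsupp htrans) z := (Module.Basis.mk_apply _ _ _).symm
  rw [h1, Module.Basis.repr_self]
  by_cases h : z = y
  · subst h; simp [ee, Finsupp.single_eq_same]
  · rw [Finsupp.single_eq_of_ne (Ne.symm h), ee, if_neg h]

lemma eesum (F : Finset I) (f : I → A) (y : I) :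
    ∑ z ∈ F, f z * ee z y = if y ∈ F then f y else 0 := by
  have : ∀ z ∈ F, f z * ee z y = if z = y then f z else 0 := by
    intro z _
    by_cases h : z = y <;> simp [ee, h]
  rw [Finset.sum_congr rfl this, Finset.sum_ite_eq' F y f]

lemma cb_repr_b (w y : I) :
    ((cbas hsupp htrans).repr (D.bas w)) y = ee w y + Q * Polynomial.toLaurent (qp w y) := by
  rw [htrans' htrans w, map_add, Finsupp.add_apply, cb_repr_c hsupp htrans]
  congr 1
  rw [map_sum, Finsupp.finset_sum_apply]
  have : ∀ z ∈ (qp w).support,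
      (((cbas hsupp htrans).repr ((Q * Polynomial.toLaurent (qp w z)) • c z)) y)
        = (Q * Polynomial.toLaurent (qp w z)) * ee z y := by
    intro z _
    rw [map_smul, Finsupp.smul_apply, cb_repr_c hsupp htrans, smul_eq_mul]
  rw [Finset.sum_congr rfl this, eesum]
  by_cases h : y ∈ (qp w).support
  · rw [if_pos h]
  · rw [if_neg h, Finsupp.notMem_support_iff.mp h, map_zero, mul_zero]

/-! ### Bar involution lemmas -/

lemma bar_zero : D.bar 0 = 0 := by
  have := D.bar_smul 0 0
  rw [zero_smul, map_zero, zero_smul] at this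
  exact this

lemma bar_neg (x : D.V) : D.bar (-x) = -(D.bar x) := by
  have := D.bar_smul (-1) x
  rw [neg_one_smul, map_neg, map_one, neg_one_smul] at this
  exact this

lemma bar_sub (x y : D.V) : D.bar (x - y) = D.bar x - D.bar y := by
  rw [sub_eq_add_neg, D.bar_add, bar_neg, sub_eq_add_neg]

lemma bar_sum {α : Type*} (F : Finset α) (f : α → D.V) :
    D.bar (∑ a ∈ F, f a) = ∑ a ∈ F, D.bar (f a) := by
  classical
  induction F using Finset.induction_on with
  | empty => simpa using bar_zero
  | insert a s hne ih => rw [Finset.sum_insert hne, Finset.sum_insert hne, D.bar_add, ih]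

lemma bar_fixed_coord (hcbar : ∀ w : I, D.bar (c w) = c w) {v : D.V} (hv : D.bar v = v)
    (y : I) :
    LaurentPolynomial.invert (((cbas hsupp htrans).repr v) y)
      = ((cbas hsupp htrans).repr v) y := by
  set cb := cbas hsupp htrans with hcb
  have hv2 : v = ∑ z ∈ (cb.repr v).support, (cb.repr v) z • c z := by
    have h1 := cb.linearCombination_repr v
    rw [Finsupp.linearCombination_apply, Finsupp.sum] at h1
    conv_lhs => rw [← h1]
    exact Finset.sum_congr rfl fun z _ => by
      rw [hcb, cbas_apply hsupp htrans]
  have hbar : D.bar v = ∑ z ∈ (cb.repr v).support,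
      (LaurentPolynomial.invert ((cb.repr v) z)) • c z := by
    conv_lhs => rw [hv2]
    rw [bar_sum]
    exact Finset.sum_congr rfl fun z _ => by rw [D.bar_smul, hcbar]
  have h2 : ∑ z ∈ (cb.repr v).support,
      (LaurentPolynomial.invert ((cb.repr v) z)) • c z = v := by rw [← hbar, hv]
  have h3 := congrArg (fun u => (cb.repr u) y) h2
  simp only [map_sum, map_smul, Finsupp.finset_sum_apply, Finsupp.smul_apply,
    smul_eq_mul] at h3
  have h4 : ∀ z ∈ (cb.repr v).support,
      LaurentPolynomial.invert ((cb.repr v) z) * (cb.repr (c z)) y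
        = LaurentPolynomial.invert ((cb.repr v) z) * ee z y := by
    intro z _
    rw [hcb, cb_repr_c hsupp htrans]
  rw [Finset.sum_congr rfl h4, eesum] at h3
  by_cases h : y ∈ (cb.repr v).support
  · rw [if_pos h] at h3; exact h3
  · rw [Finsupp.notMem_support_iff.mp h, map_zero]

lemma keyvanish (hcbar : ∀ w : I, D.bar (c w) = c w) {v : D.V} (hv : D.bar v = v)
    (hs : ∀ y : I, SPos (((cbas hsupp htrans).repr v) y)) : v = 0 := by
  have h0 : (cbas hsupp htrans).repr v = 0 := Finsupp.ext fun y => by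
    rw [Finsupp.coe_zero, Pi.zero_apply]
    exact spos_eq_zero_of_invert (hs y) (bar_fixed_coord hsupp htrans hcbar hv y)
  have := congrArg (cbas hsupp htrans).repr.symm h0
  rw [LinearEquiv.symm_apply_apply, map_zero] at this
  exact this


lemma TC {z : I} {s : B} (hz : WGP cs J c qp s z) (y : I) :
    ((cbas hsupp htrans).repr (D.T s (c z))) y = Fc cs J qp s z y := by
  rw [hz, Fc]
  by_cases hd : Desc cs J s (z : W)
  · rw [if_pos hd, if_pos hd, map_smul, Finsupp.smul_apply, cb_repr_c hsupp htrans,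
      smul_eq_mul]
  · rw [if_neg hd, if_neg hd, map_add, map_add, Finsupp.add_apply, Finsupp.add_apply]
    congr 1
    · congr 1
      · rw [map_smul, Finsupp.smul_apply, cb_repr_c hsupp htrans, smul_eq_mul]
      · rw [extra]
        by_cases h : cs.simple s * (z : W) ∈ I
        · rw [dif_pos h, cb_repr_c hsupp htrans, ee, ep]
          by_cases h2 : cs.simple s * (z : W) = (y : W)
          · rw [if_pos (Subtype.ext h2), if_pos h2]
          · rw [if_neg (fun hEq => h2 (congrArg Subtype.val hEq)), if_neg h2]
        · rw [dif_neg h, map_zero, Finsupp.zero_apply, ep, if_neg]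
          intro hEq
          exact h (hEq ▸ y.2)
    · rw [mterm, map_sum, Finsupp.finset_sum_apply]
      have h1 : ∀ x ∈ (qp z).support,
          (((cbas hsupp htrans).repr (dm cs J qp s x z • c x)) y)
            = dm cs J qp s x z * ee x y := by
        intro x _
        rw [map_smul, Finsupp.smul_apply, cb_repr_c hsupp htrans, smul_eq_mul]
      rw [Finset.sum_congr rfl h1, eesum]
      by_cases h : y ∈ (qp z).support
      · rw [if_pos h]
      · rw [if_neg h, dm, Finsupp.notMem_support_iff.mp h]
        simp

lemma sumFc (s : B) (w y : I) :
    ∑ z ∈ (qp w).support, (Q * Polynomial.toLaurent (qp w z)) * Fc cs J qp s z y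
      = (if Desc cs J s (y : W) then -(Polynomial.toLaurent (qp w y))
          else Q ^ 2 * Polynomial.toLaurent (qp w y))
        + (if h : cs.simple s * (y : W) ∈ I then
            (if Desc cs J s (cs.simple s * (y : W)) then 0
             else Q * Polynomial.toLaurent (qp w ⟨cs.simple s * (y : W), h⟩))
           else 0)
        + ∑ z ∈ (qp w).support, (if Desc cs J s (z : W) then 0
            else (Q * Polynomial.toLaurent (qp w z)) * dm cs J qp s y z) := by
  have hsplit : ∀ z ∈ (qp w).support,
      (Q * Polynomial.toLaurent (qp w z)) * Fc cs J qp s z y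
        = (if Desc cs J s (z : W) then -(Polynomial.toLaurent (qp w z))
            else Q ^ 2 * Polynomial.toLaurent (qp w z)) * ee z y
          + (if Desc cs J s (z : W) then 0 else Q * Polynomial.toLaurent (qp w z))
              * ep cs s z y
          + (if Desc cs J s (z : W) then 0
              else (Q * Polynomial.toLaurent (qp w z)) * dm cs J qp s y z) := by
    intro z _
    rw [Fc]
    by_cases hd : Desc cs J s (z : W)
    · rw [if_pos hd, if_pos hd, if_pos hd, if_pos hd]
      have h2 : Q * Polynomial.toLaurent (qp w z) * (-Qi * ee z y)
          = -(Q * Qi) * Polynomial.toLaurent (qp w z) * ee z y := by ring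
      rw [h2, QQi]
      ring
    · rw [if_neg hd, if_neg hd, if_neg hd, if_neg hd]
      ring
  rw [Finset.sum_congr rfl hsplit, Finset.sum_add_distrib, Finset.sum_add_distrib]
  congr 1
  congr 1
  · rw [eesum]
    by_cases h : y ∈ (qp w).support
    · rw [if_pos h]
    · rw [if_neg h, Finsupp.notMem_support_iff.mp h, map_zero]
      simp
  · have hep : ∀ z ∈ (qp w).support,
        (if Desc cs J s (z : W) then 0 else Q * Polynomial.toLaurent (qp w z))
            * ep cs s z y
          = if (z : W) = cs.simple s * (y : W)
              then (if Desc cs J s (z : W) then 0 else Q * Polynomial.toLaurent (qp w z))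
              else 0 := by
      intro z _
      rw [ep]
      by_cases h2 : cs.simple s * (z : W) = (y : W)
      · have hzy : (z : W) = cs.simple s * (y : W) := by rw [← h2, smul_cancel]
        rw [if_pos h2, mul_one, if_pos hzy]
      · have hzy : ¬ (z : W) = cs.simple s * (y : W) := fun hEq => h2 (by
          rw [hEq, smul_cancel])
        rw [if_neg h2, mul_zero, if_neg hzy]
    rw [Finset.sum_congr rfl hep]
    by_cases h : cs.simple s * (y : W) ∈ I
    · rw [dif_pos h]
      have h3 : ∀ z ∈ (qp w).support,
          (if (z : W) = cs.simple s * (y : W)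
            then (if Desc cs J s (z : W) then 0 else Q * Polynomial.toLaurent (qp w z))
            else 0)
          = if z = ⟨cs.simple s * (y : W), h⟩
              then (if Desc cs J s (z : W) then 0 else Q * Polynomial.toLaurent (qp w z))
              else 0 := by
        intro z _
        by_cases h4 : (z : W) = cs.simple s * (y : W)
        · rw [if_pos h4, if_pos (Subtype.ext h4)]
        · rw [if_neg h4, if_neg (fun hEq => h4 (congrArg Subtype.val hEq))]
      rw [Finset.sum_congr rfl h3, Finset.sum_ite_eq' (qp w).support
        (⟨cs.simple s * (y : W), h⟩ : I)]
      by_cases hm : (⟨cs.simple s * (y : W), h⟩ : I) ∈ (qp w).support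
      · rw [if_pos hm]
      · rw [if_neg hm, Finsupp.notMem_support_iff.mp hm, map_zero, mul_zero, ite_self]
    · rw [dif_neg h]
      apply Finset.sum_eq_zero
      intro z _
      rw [if_neg]
      intro hEq
      exact h (hEq ▸ z.2)


lemma caseSD (hs9 : ∀ w y : I, qp w y ≠ 0 → BrLt cs (y : W) (w : W)) (s : B) (w : I)
    (IH : ∀ z : I, cs.length (z : W) < cs.length (w : W) → ∀ t : B, WGP cs J c qp t z)
    (hsd : SD cs s (w : W)) : WGP cs J c qp s w := by
  have hmem : cs.simple s * (w : W) ∈ I := mem_of_sd D.ideal w.2 hsd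
  set u : I := (⟨cs.simple s * (w : W), hmem⟩ : I) with hu
  have hlu : cs.length (u : W) < cs.length (w : W) := hsd
  have hndu : ¬ Desc cs J s (u : W) := sd_mem_not_desc D.subset w.2 hsd
  have hwg := IH u hlu s
  rw [WGP, if_neg hndu] at hwg
  have hsuw : cs.simple s * (u : W) = (w : W) := smul_cancel _
  have hextra : extra cs c s u = c w := by
    rw [extra, dif_pos (show cs.simple s * (u : W) ∈ I from hsuw ▸ w.2)]
    congr 1
    exact Subtype.ext hsuw
  rw [hextra] at hwg
  set m : D.V := mterm cs J c qp s u with hm0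
  have hm : D.T s m = (-Qi) • m := by
    rw [hm0, mterm, map_sum, Finset.smul_sum]
    refine Finset.sum_congr rfl ?_
    intro x hx
    rw [map_smul]
    by_cases hd : Desc cs J s (x : W)
    · have hlx : cs.length (x : W) < cs.length (w : W) := by
        have := brlt_length (hs9 u x (Finsupp.mem_support_iff.mp hx))
        omega
      have h5 := IH x hlx s
      rw [WGP, if_pos hd] at h5
      rw [h5, smul_comm]
    · rw [dm, if_neg hd, zero_smul, zero_smul, smul_zero]
  have hquad : D.T s (D.T s (c u)) = c u + (Q - Qi) • D.T s (c u) := by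
    have h1 := LinearMap.congr_fun (D.quad s) (c u)
    simpa using h1
  have h2 := congrArg (D.T s) hwg
  rw [map_add, map_add, map_smul, hm, hquad] at h2
  rw [WGP, if_pos (show Desc cs J s (w : W) from Or.inl hsd)]
  have h3 : D.T s (c w) = c u + (Q - Qi) • D.T s (c u) - Q • D.T s (c u)
      - (-Qi) • m := by
    rw [h2]
    abel
  rw [hwg] at h3
  rw [h3]
  match_scalars <;> (ring_nf; try rw [QQi]) <;> try ring1


lemma caseWD (hcbar : ∀ w : I, D.bar (c w) = c w)
    (hs9 : ∀ w y : I, qp w y ≠ 0 → BrLt cs (y : W) (w : W))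
    (htr : ∀ w : I,
      D.bas w = c w + (qp w).sum fun y p => (Q * Polynomial.toLaurent p) • c y)
    (s : B) (w : I)
    (IH : ∀ z : I, cs.length (z : W) < cs.length (w : W) → ∀ t : B, WGP cs J c qp t z)
    (hwd : WD cs J s (w : W)) : WGP cs J c qp s w := by
  classical
  set cb := cbas hs9 htr with hcb
  have hz : ∀ z : I, z ∈ (qp w).support → ∀ t, WGP cs J c qp t z := fun z hzs t =>
    IH z (brlt_length (hs9 w z (Finsupp.mem_support_iff.mp hzs))) t
  set S : D.V := ∑ z ∈ (qp w).support, (Q * Polynomial.toLaurent (qp w z)) • c z with hS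
  have hTb2 : D.T s (c w)
      + ∑ z ∈ (qp w).support, (Q * Polynomial.toLaurent (qp w z)) • D.T s (c z)
      = (-Qi) • c w + (-Qi) • S := by
    have h2 := D.act_WD s w hwd
    rw [htrans' htr w, map_add, map_sum, smul_add] at h2
    rw [hS]
    simpa only [map_smul] using h2
  have hG : D.T s (c w) + Qi • c w
      = -∑ z ∈ (qp w).support,
          (Q * Polynomial.toLaurent (qp w z)) • (D.T s (c z) + Qi • c z) := by
    have h3 : ∑ z ∈ (qp w).support,
        (Q * Polynomial.toLaurent (qp w z)) • (D.T s (c z) + Qi • c z)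
        = ∑ z ∈ (qp w).support, (Q * Polynomial.toLaurent (qp w z)) • D.T s (c z)
          - (-Qi) • S := by
      rw [hS, Finset.smul_sum, ← Finset.sum_sub_distrib]
      refine Finset.sum_congr rfl fun z _ => ?_
      match_scalars <;> ring1
    have h4 : ∑ z ∈ (qp w).support,
        (Q * Polynomial.toLaurent (qp w z)) • D.T s (c z)
        = (-Qi) • c w + (-Qi) • S - D.T s (c w) := by
      rw [← hTb2]; abel
    rw [h3, h4]
    match_scalars <;> ring1
  have hbarG : D.bar (D.T s (c w) + Qi • c w) = D.T s (c w) + Qi • c w := by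
    rw [D.bar_add, D.bar_T, D.bar_smul, hcbar w, invert_Qi]
    match_scalars <;> ring1
  have hdesc : ∀ z ∈ (qp w).support, Desc cs J s (z : W) := by
    intro z hzs
    by_contra hnd
    have hco := bar_fixed_coord hs9 htr hcbar hbarG z
    have hstep : ∀ x ∈ (qp w).support,
        (Q * Polynomial.toLaurent (qp w x)) * (Fc cs J qp s x z + Qi * ee x z)
          = (if Desc cs J s (x : W) then 0
              else (Q + Qi) * (Q * Polynomial.toLaurent (qp w x))) * ee x z := by
      intro x hxs
      rw [Fc]
      by_cases hd : Desc cs J s (x : W)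
      · rw [if_pos hd, if_pos hd]; ring
      · rw [if_neg hd, if_neg hd]
        have hep0 : ep cs s x z = 0 := by
          rw [ep, if_neg]
          intro hEq
          apply hnd
          left
          show cs.length (cs.simple s * (z : W)) < cs.length (z : W)
          have hx2 : cs.simple s * (z : W) = (x : W) := by rw [← hEq, smul_cancel]
          have h6 := not_desc_length hd
          rw [hEq] at h6
          rw [hx2]
          exact h6
        have hdm0 : dm cs J qp s z x = 0 := by rw [dm, if_neg hnd]
        rw [hep0, hdm0]
        ring
    have hval : (cb.repr (D.T s (c w) + Qi • c w)) z
        = -((Q + Qi) * (Q * Polynomial.toLaurent (qp w z))) := by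
      rw [hG, map_neg, map_sum, Finsupp.neg_apply, Finsupp.finset_sum_apply]
      have h4 : ∀ x ∈ (qp w).support,
          (cb.repr ((Q * Polynomial.toLaurent (qp w x)) • (D.T s (c x) + Qi • c x))) z
            = (Q * Polynomial.toLaurent (qp w x)) * (Fc cs J qp s x z + Qi * ee x z) := by
        intro x hxs
        rw [map_smul, Finsupp.smul_apply, smul_eq_mul, map_add, Finsupp.add_apply,
          hcb, TC hs9 htr (hz x hxs s) z, map_smul, Finsupp.smul_apply, smul_eq_mul,
          cb_repr_c hs9 htr]
      rw [Finset.sum_congr rfl h4, Finset.sum_congr rfl hstep, eesum, if_pos hzs,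
        if_neg hnd]
    rw [hval] at hco
    have h6 : (Q + Qi) * (Q * Polynomial.toLaurent (qp w z))
        = (1 + Q ^ 2) * Polynomial.toLaurent (qp w z) := by
      rw [← mul_assoc, add_mul, QiQ]
      ring
    rw [h6, map_neg, neg_inj] at hco
    exact Finsupp.mem_support_iff.mp hzs (key2 hco)
  have hzero : ∀ z ∈ (qp w).support,
      (Q * Polynomial.toLaurent (qp w z)) • (D.T s (c z) + Qi • c z) = 0 := by
    intro z hzs
    have h7 := hz z hzs s
    rw [WGP, if_pos (hdesc z hzs)] at h7
    rw [h7, neg_smul, neg_add_cancel, smul_zero]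
  rw [WGP, if_pos (show Desc cs J s (w : W) from Or.inr hwd)]
  have h8 : D.T s (c w) + Qi • c w = 0 := by
    rw [hG, Finset.sum_eq_zero hzero, neg_zero]
  have h9 := eq_neg_of_add_eq_zero_left h8
  rw [h9, neg_smul]


lemma repr_extra (s : B) (w y : I) :
    ((cbas hsupp htrans).repr (extra cs c s w)) y = ep cs s w y := by
  rw [extra]
  by_cases h : cs.simple s * (w : W) ∈ I
  · rw [dif_pos h, cb_repr_c hsupp htrans, ee, ep]
    by_cases h2 : cs.simple s * (w : W) = (y : W)
    · rw [if_pos (Subtype.ext h2), if_pos h2]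
    · rw [if_neg (fun hEq => h2 (congrArg Subtype.val hEq)), if_neg h2]
  · rw [dif_neg h, map_zero, Finsupp.zero_apply, ep, if_neg]
    intro hEq
    exact h (hEq ▸ y.2)

lemma repr_mterm (s : B) (w y : I) :
    ((cbas hsupp htrans).repr (mterm cs J c qp s w)) y = dm cs J qp s y w := by
  rw [mterm, map_sum, Finsupp.finset_sum_apply]
  have h1 : ∀ x ∈ (qp w).support,
      (((cbas hsupp htrans).repr (dm cs J qp s x w • c x)) y)
        = dm cs J qp s x w * ee x y := by
    intro x _
    rw [map_smul, Finsupp.smul_apply, cb_repr_c hsupp htrans, smul_eq_mul]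
  rw [Finset.sum_congr rfl h1, eesum]
  by_cases h : y ∈ (qp w).support
  · rw [if_pos h]
  · rw [if_neg h, dm, Finsupp.notMem_support_iff.mp h]
    simp

lemma nn_ee (z y : I) : NN (ee z y) := by
  rw [ee]; exact nn_ite nn_one nn_zero

lemma caseAsc (hcbar : ∀ w : I, D.bar (c w) = c w)
    (hs9 : ∀ w y : I, qp w y ≠ 0 → BrLt cs (y : W) (w : W))
    (htr : ∀ w : I,
      D.bas w = c w + (qp w).sum fun y p => (Q * Polynomial.toLaurent p) • c y)
    (s : B) (w : I)
    (IH : ∀ z : I, cs.length (z : W) < cs.length (w : W) → ∀ t : B, WGP cs J c qp t z)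
    (hnd : ¬ Desc cs J s (w : W)) : WGP cs J c qp s w := by
  classical
  set cb := cbas hs9 htr with hcb
  have hz : ∀ z : I, z ∈ (qp w).support → ∀ t, WGP cs J c qp t z := fun z hzs t =>
    IH z (brlt_length (hs9 w z (Finsupp.mem_support_iff.mp hzs))) t
  set v : D.V := D.T s (c w)
    - (Q • c w + extra cs c s w + mterm cs J c qp s w) with hv
  suffices hv0 : v = 0 by
    rw [WGP, if_neg hnd]
    exact sub_eq_zero.mp hv0
  have hbar : D.bar v = v := by
    have hbe : D.bar (extra cs c s w) = extra cs c s w := by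
      rw [extra]
      by_cases h : cs.simple s * (w : W) ∈ I
      · rw [dif_pos h]; exact hcbar _
      · rw [dif_neg h]; exact bar_zero
    have hbm : D.bar (mterm cs J c qp s w) = mterm cs J c qp s w := by
      rw [mterm, bar_sum]
      refine Finset.sum_congr rfl fun x _ => ?_
      rw [D.bar_smul, hcbar]
      congr 1
      rw [dm]
      by_cases hd : Desc cs J s (x : W)
      · rw [if_pos hd]; exact invert_intCast _
      · rw [if_neg hd]; exact map_zero _
    rw [hv, bar_sub, D.bar_add, D.bar_add, D.bar_T, D.bar_smul, hcbar w, invert_Q,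
      hbe, hbm]
    match_scalars <;> ring1
  refine keyvanish hs9 htr hcbar hbar ?_
  intro y
  have h1 : D.T s (c w) = D.T s (D.bas w)
      - ∑ z ∈ (qp w).support, (Q * Polynomial.toLaurent (qp w z)) • D.T s (c z) := by
    rw [ctrans htr w, map_sub, map_sum]
    congr 1
    exact Finset.sum_congr rfl fun z _ => map_smul _ _ _
  have hco : (cb.repr v) y
      = (cb.repr (D.T s (D.bas w))) y
        - (∑ z ∈ (qp w).support, (Q * Polynomial.toLaurent (qp w z)) * Fc cs J qp s z y)
        - (Q * ee w y + ep cs s w y + dm cs J qp s y w) := by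
    have hA : (cb.repr (D.T s (c w))) y
        = (cb.repr (D.T s (D.bas w))) y
          - ∑ z ∈ (qp w).support,
              (Q * Polynomial.toLaurent (qp w z)) * Fc cs J qp s z y := by
      rw [h1, map_sub, Finsupp.sub_apply, map_sum, Finsupp.finset_sum_apply]
      congr 1
      exact Finset.sum_congr rfl fun z hzs => by
        rw [map_smul, Finsupp.smul_apply, smul_eq_mul, hcb, TC hs9 htr (hz z hzs s) y]
    have hB : (cb.repr (Q • c w + extra cs c s w + mterm cs J c qp s w)) y
        = Q * ee w y + ep cs s w y + dm cs J qp s y w := by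
      rw [map_add, map_add, Finsupp.add_apply, Finsupp.add_apply, map_smul,
        Finsupp.smul_apply, smul_eq_mul, hcb, cb_repr_c hs9 htr, repr_extra hs9 htr,
        repr_mterm hs9 htr]
    rw [hv, map_sub, Finsupp.sub_apply, hA, hB]
  have hQee : SPos (-(Q * ee w y)) := by
    rw [ee]
    by_cases h : w = y
    · rw [if_pos h, mul_one]; exact spos_neg spos_Q
    · rw [if_neg h, mul_zero, neg_zero]; exact spos_zero
  have he1 : SPos (-(if Desc cs J s (y : W) then -(Polynomial.toLaurent (qp w y))
      else Q ^ 2 * Polynomial.toLaurent (qp w y)) - dm cs J qp s y w) := by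
    rw [dm]
    by_cases hd : Desc cs J s (y : W)
    · rw [if_pos hd, if_pos hd, neg_neg]
      exact spos_sub_coeff_zero (qp w y)
    · rw [if_neg hd, if_neg hd, sub_zero]
      refine spos_neg ⟨Polynomial.X * (qp w y), ?_⟩
      rw [map_mul, Polynomial.toLaurent_X, show (LaurentPolynomial.T 1 : A) = Q from rfl]
      ring
  have he2 : SPos (-(if h : cs.simple s * (y : W) ∈ I then
      (if Desc cs J s (cs.simple s * (y : W)) then 0
        else Q * Polynomial.toLaurent (qp w ⟨cs.simple s * (y : W), h⟩))
      else 0)) := by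
    by_cases h : cs.simple s * (y : W) ∈ I
    · rw [dif_pos h]
      exact spos_neg (spos_ite spos_zero (spos_QL _))
    · rw [dif_neg h, neg_zero]; exact spos_zero
  have he3 : SPos (-(∑ z ∈ (qp w).support, (if Desc cs J s (z : W) then 0
      else (Q * Polynomial.toLaurent (qp w z)) * dm cs J qp s y z))) := by
    refine spos_neg (spos_sum fun z _ => spos_ite spos_zero ?_)
    refine spos_mul_nn (spos_QL _) ?_
    rw [dm]
    exact nn_ite (nn_intCast _) nn_zero
  rcases asc_of_not_desc w.2 hnd with hsa | hwa
  · -- strong ascent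
    have hTbw : D.T s (D.bas w) = D.bas ⟨cs.simple s * (w : W), hsa.2⟩ := D.act_SA s w hsa
    set w' : I := (⟨cs.simple s * (w : W), hsa.2⟩ : I) with hw'
    have hrb : (cb.repr (D.bas w')) y = ee w' y + Q * Polynomial.toLaurent (qp w' y) :=
      cb_repr_b hs9 htr w' y
    have hee : ee w' y = ep cs s w y := by
      rw [ee, ep]
      by_cases h : w' = y
      · rw [if_pos h, if_pos (by rw [← congrArg Subtype.val h])]
      · rw [if_neg h, if_neg (fun hEq => h (Subtype.ext hEq))]
    have hfin : (cb.repr v) y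
        = Q * Polynomial.toLaurent (qp w' y) + (-(Q * ee w y))
          + (-(if Desc cs J s (y : W) then -(Polynomial.toLaurent (qp w y))
              else Q ^ 2 * Polynomial.toLaurent (qp w y)) - dm cs J qp s y w)
          + (-(if h : cs.simple s * (y : W) ∈ I then
              (if Desc cs J s (cs.simple s * (y : W)) then 0
                else Q * Polynomial.toLaurent (qp w ⟨cs.simple s * (y : W), h⟩))
              else 0))
          + (-(∑ z ∈ (qp w).support, (if Desc cs J s (z : W) then 0
              else (Q * Polynomial.toLaurent (qp w z)) * dm cs J qp s y z))) := by
      rw [hco, hTbw, hrb, hee, sumFc s w y]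
      ring
    rw [hfin]
    exact spos_add (spos_add (spos_add (spos_add (spos_QL _) hQee) he1) he2) he3
  · -- weak ascent
    have hTbw : D.T s (D.bas w) = Q • D.bas w
        - (D.r s w).sum fun t p => (Polynomial.toLaurent p) • D.bas t := D.act_WA s w hwa
    have hrb : (cb.repr (D.T s (D.bas w))) y
        = Q * (ee w y + Q * Polynomial.toLaurent (qp w y))
          - ∑ t ∈ (D.r s w).support, (Polynomial.toLaurent ((D.r s w) t))
              * (ee t y + Q * Polynomial.toLaurent (qp t y)) := by
      have hsum : (D.r s w).sum (fun t p => (Polynomial.toLaurent p) • D.bas t)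
          = ∑ t ∈ (D.r s w).support,
              (Polynomial.toLaurent ((D.r s w) t)) • D.bas t := rfl
      rw [hTbw, hsum, map_sub, Finsupp.sub_apply, map_smul, Finsupp.smul_apply,
        smul_eq_mul, hcb, cb_repr_b hs9 htr, map_sum, Finsupp.finset_sum_apply]
      congr 1
      exact Finset.sum_congr rfl fun t _ => by
        rw [map_smul, Finsupp.smul_apply, smul_eq_mul, cb_repr_b hs9 htr]
    have hep0 : ep cs s w y = 0 := by
      rw [ep, if_neg]
      intro hEq
      exact hwa.2.2 (hEq ▸ y.2)
    have hfin : (cb.repr v) y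
        = Q * (Q * Polynomial.toLaurent (qp w y))
          + (-(∑ t ∈ (D.r s w).support, (Polynomial.toLaurent ((D.r s w) t))
              * (ee t y + Q * Polynomial.toLaurent (qp t y))))
          + (-(if Desc cs J s (y : W) then -(Polynomial.toLaurent (qp w y))
              else Q ^ 2 * Polynomial.toLaurent (qp w y)) - dm cs J qp s y w)
          + (-(if h : cs.simple s * (y : W) ∈ I then
              (if Desc cs J s (cs.simple s * (y : W)) then 0
                else Q * Polynomial.toLaurent (qp w ⟨cs.simple s * (y : W), h⟩))
              else 0))
          + (-(∑ z ∈ (qp w).support, (if Desc cs J s (z : W) then 0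
              else (Q * Polynomial.toLaurent (qp w z)) * dm cs J qp s y z))) := by
      rw [hco, hrb, hep0, sumFc s w y]
      ring
    rw [hfin]
    refine spos_add (spos_add (spos_add (spos_add ?_ ?_) he1) he2) he3
    · exact spos_mul_nn spos_Q (spos_nn (spos_QL _))
    · refine spos_neg (spos_sum fun t _ => ?_)
      refine spos_mul_nn (spos_of_coeff_zero (D.r_const s w t)) ?_
      exact nn_add (nn_ee t y) (spos_nn (spos_QL _))

lemma WGthm (hcbar : ∀ w : I, D.bar (c w) = c w)
    (hs9 : ∀ w y : I, qp w y ≠ 0 → BrLt cs (y : W) (w : W))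
    (htr : ∀ w : I,
      D.bas w = c w + (qp w).sum fun y p => (Q * Polynomial.toLaurent p) • c y) :
    ∀ w : I, ∀ s : B, WGP cs J c qp s w := by
  have hrec : ∀ n : ℕ, ∀ w : I, cs.length (w : W) < n → ∀ s : B, WGP cs J c qp s w := by
    intro n
    induction n with
    | zero => intro w hw; omega
    | succ n ih =>
      intro w hw s
      have IH : ∀ z : I, cs.length (z : W) < cs.length (w : W) → ∀ t, WGP cs J c qp t z :=
        fun z hz t => ih z (by omega) t
      by_cases hd : Desc cs J s (w : W)
      · rcases hd with hsd | hwd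
        · exact caseSD hs9 s w IH hsd
        · exact caseWD hcbar hs9 htr s w IH hwd
      · exact caseAsc hcbar hs9 htr s w IH hd
  exact fun w s => hrec (cs.length (w : W) + 1) w (by omega) s

end Module

/-- the recursion for the polynomials `q_{y,w}`. -/
theorem stmt9 (I : Set W) (J : Set B) (D : WGModule cs I J)
    (c : I → D.V) (qp : I → I →₀ Polynomial ℤ)
    (hcbar : ∀ w : I, D.bar (c w) = c w)
    (hsupp : ∀ w y : I, qp w y ≠ 0 → BrLt cs (y : W) (w : W))
    (htrans : ∀ w : I,
      D.bas w = c w + (qp w).sum fun y p => (Q * Polynomial.toLaurent p) • c y)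
    (s : B) (w : I) (hsa : SA cs I s (w : W)) (y : I)
    (hy : BrLt cs (y : W) (cs.simple s * (w : W))) :
    ((y : W) = (w : W) → qp ⟨cs.simple s * (w : W), hsa.2⟩ y = 1) ∧
    ((y : W) ≠ (w : W) → Asc cs I J s (y : W) →
      Polynomial.toLaurent (qp ⟨cs.simple s * (w : W), hsa.2⟩ y) =
        Q * Polynomial.toLaurent (qp w y)) ∧
    ((y : W) ≠ (w : W) → SD cs s (y : W) → ∀ hsy : cs.simple s * (y : W) ∈ I,
      Polynomial.toLaurent (qp ⟨cs.simple s * (w : W), hsa.2⟩ y) =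
        -Qi * (Polynomial.toLaurent (qp w y) - (((qp w y).coeff 0 : ℤ) : A))
          + Polynomial.toLaurent (qp w ⟨cs.simple s * (y : W), hsy⟩)
          + ∑ x ∈ (qp w).support,
              if BrLt cs (y : W) (x : W) ∧ ¬ Desc cs J s (x : W) then
                (((qp x y).coeff 0 : ℤ) : A) * Polynomial.toLaurent (qp w x) else 0) ∧
    ((y : W) ≠ (w : W) → WD cs J s (y : W) →
      Polynomial.toLaurent (qp ⟨cs.simple s * (w : W), hsa.2⟩ y) =
        -Qi * (Polynomial.toLaurent (qp w y) - (((qp w y).coeff 0 : ℤ) : A))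
          + ∑ x ∈ (qp w).support,
              if BrLt cs (y : W) (x : W) ∧ ¬ Desc cs J s (x : W) then
                (((qp x y).coeff 0 : ℤ) : A) * Polynomial.toLaurent (qp w x) else 0) := by
  classical
  have hWG := WGthm hcbar hsupp htrans
  set w' : I := (⟨cs.simple s * (w : W), hsa.2⟩ : I) with hw'
  set cb := cbas hsupp htrans with hcb
  have hndw : ¬ Desc cs J s (w : W) := not_desc_of_asc D.subset (Or.inl hsa)
  have hswne : ¬ (cs.simple s * (w : W) = (y : W)) := fun h => hy.2 h.symm
  have hmaster : Q * Polynomial.toLaurent (qp w' y)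
      = Fc cs J qp s w y
        + ((if Desc cs J s (y : W) then -(Polynomial.toLaurent (qp w y))
            else Q ^ 2 * Polynomial.toLaurent (qp w y))
          + (if h : cs.simple s * (y : W) ∈ I then
              (if Desc cs J s (cs.simple s * (y : W)) then 0
                else Q * Polynomial.toLaurent (qp w ⟨cs.simple s * (y : W), h⟩))
             else 0)
          + ∑ z ∈ (qp w).support, (if Desc cs J s (z : W) then 0
              else (Q * Polynomial.toLaurent (qp w z)) * dm cs J qp s y z)) := by
    have h0 : D.bas w' = D.T s (D.bas w) := (D.act_SA s w hsa).symm
    have hL : (cb.repr (D.bas w')) y = (cb.repr (D.T s (D.bas w))) y := by rw [h0]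
    rw [hcb, cb_repr_b hsupp htrans] at hL
    have hee0 : ee w' y = 0 := by
      rw [ee, if_neg]
      intro hEq
      exact hy.2 (congrArg Subtype.val hEq).symm
    have hR : (cb.repr (D.T s (D.bas w))) y
        = Fc cs J qp s w y + ∑ z ∈ (qp w).support,
            (Q * Polynomial.toLaurent (qp w z)) * Fc cs J qp s z y := by
      have h1 : D.T s (D.bas w) = D.T s (c w)
          + ∑ z ∈ (qp w).support, (Q * Polynomial.toLaurent (qp w z)) • D.T s (c z) := by
        rw [htrans' htrans w, map_add, map_sum]
        congr 1
        exact Finset.sum_congr rfl fun z _ => map_smul _ _ _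
      rw [h1, map_add, Finsupp.add_apply, hcb, TC hsupp htrans (hWG w s) y, map_sum,
        Finsupp.finset_sum_apply]
      congr 1
      exact Finset.sum_congr rfl fun z hzs => by
        rw [map_smul, Finsupp.smul_apply, smul_eq_mul, TC hsupp htrans (hWG z s) y]
    rw [hee0, zero_add, hR, sumFc s w y] at hL
    exact hL
  refine ⟨?_, ?_, ?_, ?_⟩
  · -- y = w
    intro hyw
    have hyw2 : y = w := Subtype.ext hyw
    rw [hyw2] at hmaster ⊢
    have hswW : ¬ (cs.simple s * (w : W) = (w : W)) := fun h =>
      (cs.length_simple_mul_ne (w : W) s) (by rw [h])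
    have hF : Fc cs J qp s w w = Q := by
      rw [Fc, if_neg hndw, ee, if_pos rfl, ep, if_neg hswW, dm, if_neg hndw]
      ring
    have hE1 : (if Desc cs J s (w : W) then -(Polynomial.toLaurent (qp w w))
        else Q ^ 2 * Polynomial.toLaurent (qp w w)) = 0 := by
      have h0 : qp w w = 0 := by
        by_contra hne0
        exact (hsupp w w hne0).2 rfl
      rw [h0, map_zero, if_neg hndw, mul_zero]
    have hE2 : (if h : cs.simple s * (w : W) ∈ I then
        (if Desc cs J s (cs.simple s * (w : W)) then 0
          else Q * Polynomial.toLaurent (qp w ⟨cs.simple s * (w : W), h⟩))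
        else 0) = 0 := by
      by_cases h : cs.simple s * (w : W) ∈ I
      · rw [dif_pos h, if_pos]
        left
        show cs.length (cs.simple s * (cs.simple s * (w : W)))
          < cs.length (cs.simple s * (w : W))
        rw [smul_cancel]
        exact hsa.1
      · rw [dif_neg h]
    have hE3 : ∑ z ∈ (qp w).support, (if Desc cs J s (z : W) then 0
        else (Q * Polynomial.toLaurent (qp w z)) * dm cs J qp s w z) = 0 := by
      refine Finset.sum_eq_zero fun z hzs => ?_
      by_cases hd : Desc cs J s (z : W)
      · rw [if_pos hd]
      · rw [if_neg hd, dm, if_neg hndw, mul_zero]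
    rw [hF, hE1, hE2, hE3] at hmaster
    have h2 : (Qi * Q) * Polynomial.toLaurent (qp w' w) = (Qi * Q) * 1 := by
      calc (Qi * Q) * Polynomial.toLaurent (qp w' w)
          = Qi * (Q * Polynomial.toLaurent (qp w' w)) := by ring
        _ = Qi * (Q + (0 + 0 + 0)) := by rw [hmaster]
        _ = (Qi * Q) * 1 := by ring
    rw [QiQ, one_mul, one_mul] at h2
    rw [← Polynomial.toLaurent_one] at h2
    exact Polynomial.toLaurent_injective h2
  · -- ascent
    intro hyne hasc
    have hndy : ¬ Desc cs J s (y : W) := not_desc_of_asc D.subset hasc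
    have hF : Fc cs J qp s w y = 0 := by
      rw [Fc, if_neg hndw, ee, if_neg (fun h => hyne (congrArg Subtype.val h).symm),
        ep, if_neg hswne, dm, if_neg hndy]
      ring
    have hE2 : (if h : cs.simple s * (y : W) ∈ I then
        (if Desc cs J s (cs.simple s * (y : W)) then 0
          else Q * Polynomial.toLaurent (qp w ⟨cs.simple s * (y : W), h⟩))
        else 0) = 0 := by
      by_cases h : cs.simple s * (y : W) ∈ I
      · rw [dif_pos h, if_pos]
        left
        show cs.length (cs.simple s * (cs.simple s * (y : W)))
          < cs.length (cs.simple s * (y : W))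
        rw [smul_cancel]
        exact not_desc_length hndy
      · rw [dif_neg h]
    have hE3 : ∑ z ∈ (qp w).support, (if Desc cs J s (z : W) then 0
        else (Q * Polynomial.toLaurent (qp w z)) * dm cs J qp s y z) = 0 := by
      refine Finset.sum_eq_zero fun z hzs => ?_
      by_cases hd : Desc cs J s (z : W)
      · rw [if_pos hd]
      · rw [if_neg hd, dm, if_neg hndy, mul_zero]
    rw [hF, hE2, hE3, if_neg hndy] at hmaster
    have h2 : (Qi * Q) * Polynomial.toLaurent (qp w' y)
        = (Qi * Q) * (Q * Polynomial.toLaurent (qp w y)) := by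
      calc (Qi * Q) * Polynomial.toLaurent (qp w' y)
          = Qi * (Q * Polynomial.toLaurent (qp w' y)) := by ring
        _ = Qi * (0 + (Q ^ 2 * Polynomial.toLaurent (qp w y) + 0 + 0)) := by rw [hmaster]
        _ = (Qi * Q) * (Q * Polynomial.toLaurent (qp w y)) := by ring
    rwa [QiQ, one_mul, one_mul] at h2
  · -- strong descent
    intro hyne hsd hsy
    have hdy : Desc cs J s (y : W) := Or.inl hsd
    have hF : Fc cs J qp s w y = (((qp w y).coeff 0 : ℤ) : A) := by
      rw [Fc, if_neg hndw, ee, if_neg (fun h => hyne (congrArg Subtype.val h).symm),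
        ep, if_neg hswne, dm, if_pos hdy]
      ring
    have hE2 : (if h : cs.simple s * (y : W) ∈ I then
        (if Desc cs J s (cs.simple s * (y : W)) then 0
          else Q * Polynomial.toLaurent (qp w ⟨cs.simple s * (y : W), h⟩))
        else 0) = Q * Polynomial.toLaurent (qp w ⟨cs.simple s * (y : W), hsy⟩) := by
      rw [dif_pos hsy, if_neg (sd_mem_not_desc D.subset y.2 hsd)]
    have hE3 : ∑ z ∈ (qp w).support, (if Desc cs J s (z : W) then 0
        else (Q * Polynomial.toLaurent (qp w z)) * dm cs J qp s y z)
        = ∑ z ∈ (qp w).support, (if Desc cs J s (z : W) then 0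
            else (Q * Polynomial.toLaurent (qp w z)) * (((qp z y).coeff 0 : ℤ) : A)) := by
      refine Finset.sum_congr rfl fun z hzs => ?_
      by_cases hd : Desc cs J s (z : W)
      · rw [if_pos hd, if_pos hd]
      · rw [if_neg hd, if_neg hd, dm, if_pos hdy]
    rw [hF, hE2, hE3, if_pos hdy] at hmaster
    have hS3 : Qi * ∑ z ∈ (qp w).support, (if Desc cs J s (z : W) then 0
        else (Q * Polynomial.toLaurent (qp w z)) * (((qp z y).coeff 0 : ℤ) : A))
        = ∑ x ∈ (qp w).support, (if BrLt cs (y : W) (x : W) ∧ ¬ Desc cs J s (x : W) then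
            (((qp x y).coeff 0 : ℤ) : A) * Polynomial.toLaurent (qp w x) else 0) := by
      rw [Finset.mul_sum]
      refine Finset.sum_congr rfl fun x hx => ?_
      by_cases hd : Desc cs J s (x : W)
      · rw [if_pos hd, mul_zero, if_neg (fun hc => hc.2 hd)]
      · rw [if_neg hd]
        by_cases hb : BrLt cs (y : W) (x : W)
        · rw [if_pos ⟨hb, hd⟩]
          have h5 : Qi * (Q * Polynomial.toLaurent (qp w x) * (((qp x y).coeff 0 : ℤ) : A))
              = (Qi * Q) * (Polynomial.toLaurent (qp w x) * (((qp x y).coeff 0 : ℤ) : A)) := by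
            ring
          rw [h5, QiQ, one_mul]
          ring
        · rw [if_neg (fun hc => hb hc.1)]
          have h0 : qp x y = 0 := by
            by_contra hne0
            exact hb (hsupp x y hne0)
          rw [h0]
          simp
    calc Polynomial.toLaurent (qp w' y)
        = (Qi * Q) * Polynomial.toLaurent (qp w' y) := by rw [QiQ, one_mul]
      _ = Qi * (Q * Polynomial.toLaurent (qp w' y)) := by ring
      _ = Qi * ((((qp w y).coeff 0 : ℤ) : A)
            + (-(Polynomial.toLaurent (qp w y))
              + Q * Polynomial.toLaurent (qp w ⟨cs.simple s * (y : W), hsy⟩)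
              + ∑ z ∈ (qp w).support, (if Desc cs J s (z : W) then 0
                  else (Q * Polynomial.toLaurent (qp w z))
                    * (((qp z y).coeff 0 : ℤ) : A)))) := by rw [hmaster]
      _ = Qi * (((qp w y).coeff 0 : ℤ) : A) - Qi * Polynomial.toLaurent (qp w y)
            + (Qi * Q) * Polynomial.toLaurent (qp w ⟨cs.simple s * (y : W), hsy⟩)
            + Qi * ∑ z ∈ (qp w).support, (if Desc cs J s (z : W) then 0
                else (Q * Polynomial.toLaurent (qp w z))
                  * (((qp z y).coeff 0 : ℤ) : A)) := by ring
      _ = -Qi * (Polynomial.toLaurent (qp w y) - (((qp w y).coeff 0 : ℤ) : A))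
            + Polynomial.toLaurent (qp w ⟨cs.simple s * (y : W), hsy⟩)
            + ∑ x ∈ (qp w).support, (if BrLt cs (y : W) (x : W) ∧ ¬ Desc cs J s (x : W) then
                (((qp x y).coeff 0 : ℤ) : A) * Polynomial.toLaurent (qp w x) else 0) := by
          rw [QiQ, one_mul, hS3]
          ring
  · -- weak descent
    intro hyne hwd
    have hdy : Desc cs J s (y : W) := Or.inr hwd
    have hF : Fc cs J qp s w y = (((qp w y).coeff 0 : ℤ) : A) := by
      rw [Fc, if_neg hndw, ee, if_neg (fun h => hyne (congrArg Subtype.val h).symm),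
        ep, if_neg hswne, dm, if_pos hdy]
      ring
    have hE2 : (if h : cs.simple s * (y : W) ∈ I then
        (if Desc cs J s (cs.simple s * (y : W)) then 0
          else Q * Polynomial.toLaurent (qp w ⟨cs.simple s * (y : W), h⟩))
        else 0) = 0 := by
      rw [dif_neg]
      intro hmem
      exact hwd.2 (D.subset hmem)
    have hE3 : ∑ z ∈ (qp w).support, (if Desc cs J s (z : W) then 0
        else (Q * Polynomial.toLaurent (qp w z)) * dm cs J qp s y z)
        = ∑ z ∈ (qp w).support, (if Desc cs J s (z : W) then 0
            else (Q * Polynomial.toLaurent (qp w z)) * (((qp z y).coeff 0 : ℤ) : A)) := by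
      refine Finset.sum_congr rfl fun z hzs => ?_
      by_cases hd : Desc cs J s (z : W)
      · rw [if_pos hd, if_pos hd]
      · rw [if_neg hd, if_neg hd, dm, if_pos hdy]
    rw [hF, hE2, hE3, if_pos hdy] at hmaster
    have hS3 : Qi * ∑ z ∈ (qp w).support, (if Desc cs J s (z : W) then 0
        else (Q * Polynomial.toLaurent (qp w z)) * (((qp z y).coeff 0 : ℤ) : A))
        = ∑ x ∈ (qp w).support, (if BrLt cs (y : W) (x : W) ∧ ¬ Desc cs J s (x : W) then
            (((qp x y).coeff 0 : ℤ) : A) * Polynomial.toLaurent (qp w x) else 0) := by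
      rw [Finset.mul_sum]
      refine Finset.sum_congr rfl fun x hx => ?_
      by_cases hd : Desc cs J s (x : W)
      · rw [if_pos hd, mul_zero, if_neg (fun hc => hc.2 hd)]
      · rw [if_neg hd]
        by_cases hb : BrLt cs (y : W) (x : W)
        · rw [if_pos ⟨hb, hd⟩]
          have h5 : Qi * (Q * Polynomial.toLaurent (qp w x) * (((qp x y).coeff 0 : ℤ) : A))
              = (Qi * Q) * (Polynomial.toLaurent (qp w x) * (((qp x y).coeff 0 : ℤ) : A)) := by
            ring
          rw [h5, QiQ, one_mul]
          ring
        · rw [if_neg (fun hc => hb hc.1)]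
          have h0 : qp x y = 0 := by
            by_contra hne0
            exact hb (hsupp x y hne0)
          rw [h0]
          simp
    calc Polynomial.toLaurent (qp w' y)
        = (Qi * Q) * Polynomial.toLaurent (qp w' y) := by rw [QiQ, one_mul]
      _ = Qi * (Q * Polynomial.toLaurent (qp w' y)) := by ring
      _ = Qi * ((((qp w y).coeff 0 : ℤ) : A)
            + (-(Polynomial.toLaurent (qp w y)) + 0
              + ∑ z ∈ (qp w).support, (if Desc cs J s (z : W) then 0
                  else (Q * Polynomial.toLaurent (qp w z))
                    * (((qp z y).coeff 0 : ℤ) : A)))) := by rw [hmaster]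
      _ = Qi * (((qp w y).coeff 0 : ℤ) : A) - Qi * Polynomial.toLaurent (qp w y)
            + Qi * ∑ z ∈ (qp w).support, (if Desc cs J s (z : W) then 0
                else (Q * Polynomial.toLaurent (qp w z))
                  * (((qp z y).coeff 0 : ℤ) : A)) := by ring
      _ = -Qi * (Polynomial.toLaurent (qp w y) - (((qp w y).coeff 0 : ℤ) : A))
            + ∑ x ∈ (qp w).support, (if BrLt cs (y : W) (x : W) ∧ ¬ Desc cs J s (x : W) then
                (((qp x y).coeff 0 : ℤ) : A) * Polynomial.toLaurent (qp w x) else 0) := by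
          rw [hS3]
          ring

end WGI
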